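/- For types B_n and C_n with Coxeter number h = 2n, the polynomials δ̃_{i,j}(t) obtained from the inverse of B(t) = C_t(t)D⁻¹ are given by δ̃_{i,j}(t) = max(d_i, d_j) Σ_{s=1}^{min(i,j)} ( t^{|i−j|+2s−1} + [max(i,j) < n] t^{2n−i−j+2s−1} ), where [P] is 1 if P holds and 0 otherwise, and (d_1,...,d_n) = (2,...,2,1) in type B_n and (1,...,1,2) in type C_n. -/

import Mathlib

/-- The Cartan matrix of type `Bₙ` (1-based indices `1, …, n`, with `αₙ` the short simple
root, so `c_{n,n−1} = −2`). -/
def cBmat (n i j : ℕ) : ℤ :=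
  if i = j then 2
  else if i = n ∧ j + 1 = n then -2
  else if i + 1 = j ∨ j + 1 = i then -1
  else 0

/-- The Cartan matrix of type `Cₙ` (transpose of that of `Bₙ`). -/
def cCmat (n i j : ℕ) : ℤ := cBmat n j i

/-- The symmetrizer of type `Bₙ`: `(d₁, …, dₙ) = (2, …, 2, 1)`. -/
def dBvec (n i : ℕ) : ℚ := if i = n then 1 else 2

/-- The symmetrizer of type `Cₙ`: `(d₁, …, dₙ) = (1, …, 1, 2)`. -/
def dCvec (n i : ℕ) : ℚ := if i = n then 2 else 1

/-- Indicator of the "cone" `|i-k| < u < i+k`, `u ≡ i+k+1 (mod 2)`. -/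
def Xfun (i k : ℕ) (u : ℤ) : ℚ :=
  if ((i:ℤ) - k < u ∧ (k:ℤ) - i < u ∧ u < (i:ℤ) + k ∧ (u + i + k) % 2 = 1) then 1 else 0

/-- Indicator of the reflected cone. -/
def Yfun (n i k : ℕ) (u : ℤ) : ℚ :=
  if (i < n ∧ k < n ∧ 2*(n:ℤ) - i - k < u ∧ u + i - k < 2*(n:ℤ) ∧ u + k - i < 2*(n:ℤ)
      ∧ (u + i + k) % 2 = 1) then 1 else 0

/-- The claimed closed form. -/
def Ffun (n : ℕ) (d : ℕ → ℚ) (i j : ℕ) (u : ℤ) : ℚ :=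
  max (d i) (d j) *
    ∑ s ∈ Finset.Icc 1 (min i j),
      ((if u = |(i : ℤ) - (j : ℤ)| + 2 * (s : ℤ) - 1 then 1 else 0) +
       (if max i j < n ∧ u = 2 * (n : ℤ) - i - j + 2 * (s : ℤ) - 1 then 1 else 0))

lemma indSum (m : ℕ) (a u : ℤ) :
    (∑ s ∈ Finset.Icc 1 m, if u = a + 2 * (s : ℤ) - 1 then (1:ℚ) else 0)
    = if a < u ∧ u < a + 2 * m ∧ (u - a) % 2 = 1 then 1 else 0 := by
  induction m with
  | zero =>
    rw [Finset.Icc_eq_empty (by omega), Finset.sum_empty, if_neg (by omega)]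
  | succ m ih =>
    rw [Finset.sum_Icc_succ_top (by omega), ih]
    push_cast
    split_ifs <;> first | (exfalso; omega) | norm_num

lemma Ffun_eq (n : ℕ) (d : ℕ → ℚ) (i k : ℕ) (u : ℤ) :
    Ffun n d i k u = max (d i) (d k) * (Xfun i k u + Yfun n i k u) := by
  have e1 : (∑ s ∈ Finset.Icc 1 (min i k),
      if u = |(i : ℤ) - (k : ℤ)| + 2 * (s : ℤ) - 1 then (1:ℚ) else 0) = Xfun i k u := by
    unfold Xfun
    rw [indSum]
    refine if_congr ?_ rfl rfl
    rcases abs_cases ((i:ℤ) - (k:ℤ)) with ⟨h, h'⟩ | ⟨h, h'⟩ <;> rw [h] <;> push_cast <;> omega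
  have e2 : (∑ s ∈ Finset.Icc 1 (min i k),
      if max i k < n ∧ u = 2 * (n : ℤ) - i - k + 2 * (s : ℤ) - 1 then (1:ℚ) else 0)
      = Yfun n i k u := by
    unfold Yfun
    by_cases hm : max i k < n
    · simp only [hm, true_and]
      rw [indSum]
      refine if_congr ?_ rfl rfl
      push_cast
      omega
    · simp only [hm, false_and, if_false, Finset.sum_const_zero]
      rw [if_neg (by omega)]
  unfold Ffun
  rw [Finset.sum_add_distrib, e1, e2]

lemma Xzero (b : ℕ) (v : ℤ) : Xfun 0 b v = 0 := by
  unfold Xfun; rw [if_neg (by omega)]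

lemma Yzero (n b : ℕ) (v : ℤ) : Yfun n 0 b v = 0 := by
  unfold Yfun; rw [if_neg (by omega)]

lemma Yn (n a b : ℕ) (v : ℤ) (ha : a = n) : Yfun n a b v = 0 := by
  unfold Yfun; rw [if_neg (by omega)]

lemma Ykn (n a b : ℕ) (v : ℤ) (hb : b = n) : Yfun n a b v = 0 := by
  unfold Yfun; rw [if_neg (by omega)]

/-- discrete harmonicity of the cone indicator, with a source at `(k, 0)`. -/
lemma Xid (i k : ℕ) (u : ℤ) (hi : 1 ≤ i) (hk : 1 ≤ k) :
    Xfun i k (u-1) + Xfun i k (u+1)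
      = Xfun (i-1) k u + Xfun (i+1) k u + (if i = k ∧ u = 0 then (1:ℚ) else 0) := by
  unfold Xfun
  split_ifs <;> first | (exfalso; omega) | norm_num

/-- discrete harmonicity of the reflected cone in the interior. -/
lemma Yint (n i k : ℕ) (u : ℤ) (hi : 1 ≤ i) (hin : i + 1 < n)
    (hu0 : 0 ≤ u) (hu2 : u ≤ 2*(n:ℤ) - 1) :
    Yfun n i k (u-1) + Yfun n i k (u+1) = Yfun n (i-1) k u + Yfun n (i+1) k u := by
  unfold Yfun
  split_ifs <;> first | (exfalso; omega) | norm_num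

/-- reflection relation just below the wall. -/
lemma Yrefl (n i k : ℕ) (u : ℤ) (hi : 1 ≤ i) (hin : i + 1 = n) (hk : 1 ≤ k) (hkn : k < n)
    (hu0 : 0 ≤ u) (hu2 : u ≤ 2*(n:ℤ) - 1) :
    Yfun n i k (u-1) + Yfun n i k (u+1) = Yfun n (i-1) k u + Xfun (i+1) k u := by
  unfold Xfun Yfun
  split_ifs <;> first | (exfalso; omega) | norm_num

/-- wall relation at `i = n`, `k < n`. -/
lemma Xwall (n i k : ℕ) (u : ℤ) (hin : i = n) (hk : 1 ≤ k) (hkn : k < n) (hn : 2 ≤ n)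
    (hu0 : 0 ≤ u) (hu2 : u ≤ 2*(n:ℤ) - 1) :
    Xfun i k (u-1) + Xfun i k (u+1) = Xfun (i-1) k u + Yfun n (i-1) k u := by
  unfold Xfun Yfun
  split_ifs <;> first | (exfalso; omega) | norm_num

/-- wall relation at `i = k = n`. -/
lemma Xwnn (n i k : ℕ) (u : ℤ) (hin : i = n) (hk : k = n) (hn : 2 ≤ n)
    (hu0 : 0 ≤ u) (hu2 : u ≤ 2*(n:ℤ) - 1) :
    Xfun i k (u-1) + Xfun i k (u+1)
      = 2 * Xfun (i-1) k u + (if i = k ∧ u = 0 then (1:ℚ) else 0) := by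
  unfold Xfun
  split_ifs <;> first | (exfalso; omega) | norm_num

lemma sum_erase_two (n i : ℕ) (hi : 1 ≤ i) (hi' : i ≤ n) (g : ℕ → ℚ)
    (hg : ∀ j, 1 ≤ j → j ≤ n → j ≠ i → j ≠ i - 1 → j ≠ i + 1 → g j = 0) :
    ∑ j ∈ (Finset.Icc 1 n).erase i, g j
      = (if 2 ≤ i then g (i-1) else 0) + (if i + 1 ≤ n then g (i+1) else 0) := by
  have hrw : ∀ j ∈ (Finset.Icc 1 n).erase i,
      g j = (if j = i - 1 then g (i-1) else 0) + (if j = i + 1 then g (i+1) else 0) := by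
    intro j hj
    rw [Finset.mem_erase, Finset.mem_Icc] at hj
    by_cases h1 : j = i - 1
    · subst h1; rw [if_pos rfl, if_neg (by omega), add_zero]
    · by_cases h2 : j = i + 1
      · subst h2; rw [if_neg (by omega), if_pos rfl, zero_add]
      · rw [if_neg h1, if_neg h2, add_zero]
        exact hg j hj.2.1 hj.2.2 hj.1 h1 h2
  rw [Finset.sum_congr rfl hrw, Finset.sum_add_distrib,
      Finset.sum_ite_eq' _ (i-1) (fun _ => g (i-1)), Finset.sum_ite_eq' _ (i+1) (fun _ => g (i+1))]
  congr 1
  · refine if_congr ?_ rfl rfl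
    rw [Finset.mem_erase, Finset.mem_Icc]; omega
  · refine if_congr ?_ rfl rfl
    rw [Finset.mem_erase, Finset.mem_Icc]; omega

lemma sum_erase_two' (n i : ℕ) (hi : 1 ≤ i) (hi' : i ≤ n) (g : ℕ → ℚ) (h0 : g 0 = 0)
    (hg : ∀ j, 1 ≤ j → j ≤ n → j ≠ i → j ≠ i - 1 → j ≠ i + 1 → g j = 0) :
    ∑ j ∈ (Finset.Icc 1 n).erase i, g j
      = g (i-1) + (if i + 1 ≤ n then g (i+1) else 0) := by
  rw [sum_erase_two n i hi hi' g hg]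
  by_cases h2 : 2 ≤ i
  · rw [if_pos h2]
  · rw [if_neg h2, show i - 1 = 0 by omega, h0]

lemma keyB (n : ℕ) (hn : 2 ≤ n) (i k : ℕ) (hi1 : 1 ≤ i) (hin : i ≤ n)
    (hk1 : 1 ≤ k) (hkn : k ≤ n) (u : ℤ) (hu0 : 0 ≤ u) (hu2 : u ≤ 2*(n:ℤ) - 1) :
    (Ffun n (dBvec n) i k (u-1) + Ffun n (dBvec n) i k (u+1)) / dBvec n i +
      ∑ j ∈ (Finset.Icc 1 n).erase i, ((cBmat n i j : ℚ) / dBvec n j) * Ffun n (dBvec n) j k u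
    = if i = k ∧ u = 0 then 1 else 0 := by
  have F0 : Ffun n (dBvec n) 0 k u = 0 := by
    rw [Ffun_eq, Xzero, Yzero, add_zero, mul_zero]
  rw [sum_erase_two' n i hi1 hin _ (by rw [F0, mul_zero]) (fun j hj1 hjn hji hjm hjp => by
    have hc : cBmat n i j = 0 := by
      unfold cBmat
      rw [if_neg (by omega), if_neg (by omega), if_neg (by omega)]
    rw [hc]; norm_num)]
  simp only [Ffun_eq]
  by_cases hieq : i = n
  · rw [if_neg (show ¬ (i+1 ≤ n) by omega)]
    have c_sub : cBmat n i (i-1) = -2 := by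
      unfold cBmat; rw [if_neg (by omega), if_pos (by omega)]
    have M_sub : max (dBvec n (i-1)) (dBvec n k) = 2 := by
      unfold dBvec; rw [if_neg (by omega)]; split_ifs <;> norm_num [max_def]
    have d_i : dBvec n i = 1 := by unfold dBvec; rw [if_pos hieq]
    have d_sub : dBvec n (i-1) = 2 := by unfold dBvec; rw [if_neg (by omega)]
    rw [c_sub, M_sub]
    by_cases hk : k = n
    · have M_ik : max (dBvec n i) (dBvec n k) = 1 := by
        unfold dBvec; rw [if_pos hieq, if_pos hk]; norm_num [max_def]
      rw [M_ik, d_i, d_sub]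
      have hY1 := Yn n i k (u-1) hieq
      have hY3 := Yn n i k (u+1) hieq
      have hY5 := Ykn n (i-1) k u hk
      have hW := Xwnn n i k u hieq hk hn hu0 hu2
      push_cast
      linarith [hY1, hY3, hY5, hW]
    · have M_ik : max (dBvec n i) (dBvec n k) = 2 := by
        unfold dBvec; rw [if_pos hieq, if_neg hk]; norm_num [max_def]
      rw [M_ik, d_i, d_sub]
      have hY1 := Yn n i k (u-1) hieq
      have hY3 := Yn n i k (u+1) hieq
      have hz : (if i = k ∧ u = 0 then (1:ℚ) else 0) = 0 := if_neg (by omega)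
      have hW := Xwall n i k u hieq hk1 (by omega) hn hu0 hu2
      push_cast
      linarith [hY1, hY3, hz, hW]
  · rw [if_pos (show i + 1 ≤ n by omega)]
    have c_sub : cBmat n i (i-1) = -1 := by
      unfold cBmat; rw [if_neg (by omega), if_neg (by omega), if_pos (by omega)]
    have c_add : cBmat n i (i+1) = -1 := by
      unfold cBmat; rw [if_neg (by omega), if_neg (by omega), if_pos (by omega)]
    have M_ik : max (dBvec n i) (dBvec n k) = 2 := by
      unfold dBvec; rw [if_neg hieq]; split_ifs <;> norm_num [max_def]
    have M_sub : max (dBvec n (i-1)) (dBvec n k) = 2 := by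
      unfold dBvec; rw [if_neg (by omega)]; split_ifs <;> norm_num [max_def]
    have d_i : dBvec n i = 2 := by unfold dBvec; rw [if_neg hieq]
    have d_sub : dBvec n (i-1) = 2 := by unfold dBvec; rw [if_neg (by omega)]
    rw [c_sub, c_add, M_ik, M_sub, d_i, d_sub]
    have hXid := Xid i k u hi1 hk1
    by_cases hi2 : i + 1 = n
    · have d_add : dBvec n (i+1) = 1 := by unfold dBvec; rw [if_pos hi2]
      by_cases hk : k = n
      · have M_add : max (dBvec n (i+1)) (dBvec n k) = 1 := by
          unfold dBvec; rw [if_pos hi2, if_pos hk]; norm_num [max_def]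
        rw [M_add, d_add]
        have hY1 := Ykn n i k (u-1) hk
        have hY3 := Ykn n i k (u+1) hk
        have hY5 := Ykn n (i-1) k u hk
        have hY7 := Ykn n (i+1) k u hk
        push_cast
        linarith [hXid, hY1, hY3, hY5, hY7]
      · have M_add : max (dBvec n (i+1)) (dBvec n k) = 2 := by
          unfold dBvec; rw [if_pos hi2, if_neg hk]; norm_num [max_def]
        rw [M_add, d_add]
        have hR := Yrefl n i k u hi1 hi2 hk1 (by omega) hu0 hu2
        have hY7 := Yn n (i+1) k u hi2
        push_cast
        linarith [hXid, hR, hY7]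
    · have d_add : dBvec n (i+1) = 2 := by unfold dBvec; rw [if_neg hi2]
      have M_add : max (dBvec n (i+1)) (dBvec n k) = 2 := by
        unfold dBvec; rw [if_neg hi2]; split_ifs <;> norm_num [max_def]
      rw [M_add, d_add]
      have hY := Yint n i k u hi1 (by omega) hu0 hu2
      push_cast
      linarith [hXid, hY]

lemma keyC (n : ℕ) (hn : 2 ≤ n) (i k : ℕ) (hi1 : 1 ≤ i) (hin : i ≤ n)
    (hk1 : 1 ≤ k) (hkn : k ≤ n) (u : ℤ) (hu0 : 0 ≤ u) (hu2 : u ≤ 2*(n:ℤ) - 1) :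
    (Ffun n (dCvec n) i k (u-1) + Ffun n (dCvec n) i k (u+1)) / dCvec n i +
      ∑ j ∈ (Finset.Icc 1 n).erase i, ((cCmat n i j : ℚ) / dCvec n j) * Ffun n (dCvec n) j k u
    = if i = k ∧ u = 0 then 1 else 0 := by
  have F0 : Ffun n (dCvec n) 0 k u = 0 := by
    rw [Ffun_eq, Xzero, Yzero, add_zero, mul_zero]
  rw [sum_erase_two' n i hi1 hin _ (by rw [F0, mul_zero]) (fun j hj1 hjn hji hjm hjp => by
    have hc : cCmat n i j = 0 := by
      unfold cCmat cBmat
      rw [if_neg (by omega), if_neg (by omega), if_neg (by omega)]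
    rw [hc]; norm_num)]
  simp only [Ffun_eq]
  have c_sub : cCmat n i (i-1) = -1 := by
    unfold cCmat cBmat; rw [if_neg (by omega), if_neg (by omega), if_pos (by omega)]
  by_cases hieq : i = n
  · rw [if_neg (show ¬ (i+1 ≤ n) by omega)]
    have d_i : dCvec n i = 2 := by unfold dCvec; rw [if_pos hieq]
    have d_sub : dCvec n (i-1) = 1 := by unfold dCvec; rw [if_neg (by omega)]
    have M_ik : max (dCvec n i) (dCvec n k) = 2 := by
      unfold dCvec; rw [if_pos hieq]; split_ifs <;> norm_num [max_def]
    rw [c_sub, M_ik]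
    by_cases hk : k = n
    · have M_sub : max (dCvec n (i-1)) (dCvec n k) = 2 := by
        unfold dCvec; rw [if_neg (by omega), if_pos hk]; norm_num [max_def]
      rw [M_sub, d_i, d_sub]
      have hY1 := Yn n i k (u-1) hieq
      have hY3 := Yn n i k (u+1) hieq
      have hY5 := Ykn n (i-1) k u hk
      have hW := Xwnn n i k u hieq hk hn hu0 hu2
      push_cast
      linarith [hY1, hY3, hY5, hW]
    · have M_sub : max (dCvec n (i-1)) (dCvec n k) = 1 := by
        unfold dCvec; rw [if_neg (by omega), if_neg hk]; norm_num [max_def]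
      rw [M_sub, d_i, d_sub]
      have hY1 := Yn n i k (u-1) hieq
      have hY3 := Yn n i k (u+1) hieq
      have hz : (if i = k ∧ u = 0 then (1:ℚ) else 0) = 0 := if_neg (by omega)
      have hW := Xwall n i k u hieq hk1 (by omega) hn hu0 hu2
      push_cast
      linarith [hY1, hY3, hz, hW]
  · rw [if_pos (show i + 1 ≤ n by omega)]
    have d_i : dCvec n i = 1 := by unfold dCvec; rw [if_neg hieq]
    have d_sub : dCvec n (i-1) = 1 := by unfold dCvec; rw [if_neg (by omega)]
    have hXid := Xid i k u hi1 hk1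
    by_cases hk : k = n
    · have M_ik : max (dCvec n i) (dCvec n k) = 2 := by
        unfold dCvec; rw [if_neg hieq, if_pos hk]; norm_num [max_def]
      have M_sub : max (dCvec n (i-1)) (dCvec n k) = 2 := by
        unfold dCvec; rw [if_neg (by omega), if_pos hk]; norm_num [max_def]
      rw [c_sub, M_ik, M_sub, d_i, d_sub]
      have hY1 := Ykn n i k (u-1) hk
      have hY3 := Ykn n i k (u+1) hk
      have hY5 := Ykn n (i-1) k u hk
      have hY7 := Ykn n (i+1) k u hk
      have hz : (if i = k ∧ u = 0 then (1:ℚ) else 0) = 0 := if_neg (by omega)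
      by_cases hi2 : i + 1 = n
      · have c_add : cCmat n i (i+1) = -2 := by
          unfold cCmat cBmat; rw [if_neg (by omega), if_pos (by omega)]
        have d_add : dCvec n (i+1) = 2 := by unfold dCvec; rw [if_pos hi2]
        have M_add : max (dCvec n (i+1)) (dCvec n k) = 2 := by
          unfold dCvec; rw [if_pos hi2, if_pos hk]; norm_num [max_def]
        rw [c_add, M_add, d_add]
        push_cast
        linarith [hXid, hY1, hY3, hY5, hY7, hz]
      · have c_add : cCmat n i (i+1) = -1 := by
          unfold cCmat cBmat; rw [if_neg (by omega), if_neg (by omega), if_pos (by omega)]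
        have d_add : dCvec n (i+1) = 1 := by unfold dCvec; rw [if_neg hi2]
        have M_add : max (dCvec n (i+1)) (dCvec n k) = 2 := by
          unfold dCvec; rw [if_neg hi2, if_pos hk]; norm_num [max_def]
        rw [c_add, M_add, d_add]
        push_cast
        linarith [hXid, hY1, hY3, hY5, hY7, hz]
    · have M_ik : max (dCvec n i) (dCvec n k) = 1 := by
        unfold dCvec; rw [if_neg hieq, if_neg hk]; norm_num [max_def]
      have M_sub : max (dCvec n (i-1)) (dCvec n k) = 1 := by
        unfold dCvec; rw [if_neg (by omega), if_neg hk]; norm_num [max_def]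
      rw [c_sub, M_ik, M_sub, d_i, d_sub]
      by_cases hi2 : i + 1 = n
      · have c_add : cCmat n i (i+1) = -2 := by
          unfold cCmat cBmat; rw [if_neg (by omega), if_pos (by omega)]
        have d_add : dCvec n (i+1) = 2 := by unfold dCvec; rw [if_pos hi2]
        have M_add : max (dCvec n (i+1)) (dCvec n k) = 2 := by
          unfold dCvec; rw [if_pos hi2, if_neg hk]; norm_num [max_def]
        rw [c_add, M_add, d_add]
        have hR := Yrefl n i k u hi1 hi2 hk1 (by omega) hu0 hu2
        have hY7 := Yn n (i+1) k u hi2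
        push_cast
        linarith [hXid, hR, hY7]
      · have c_add : cCmat n i (i+1) = -1 := by
          unfold cCmat cBmat; rw [if_neg (by omega), if_neg (by omega), if_pos (by omega)]
        have d_add : dCvec n (i+1) = 1 := by unfold dCvec; rw [if_neg hi2]
        have M_add : max (dCvec n (i+1)) (dCvec n k) = 1 := by
          unfold dCvec; rw [if_neg hi2, if_neg hk]; norm_num [max_def]
        rw [c_add, M_add, d_add]
        have hY := Yint n i k u hi1 (by omega) hu0 hu2
        push_cast
        linarith [hXid, hY]

lemma mainlem (n : ℕ) (hn : 2 ≤ n) (d : ℕ → ℚ) (hd : ∀ i, d i ≠ 0) (c : ℕ → ℕ → ℤ)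
    (b : ℕ → ℕ → ℤ → ℚ)
    (hlow : ∃ N : ℤ, ∀ i j u, u < N → b i j u = 0)
    (h1 : ∀ i ∈ Finset.Icc 1 n, ∀ k ∈ Finset.Icc 1 n, ∀ u : ℤ,
      (b i k (u - 1) + b i k (u + 1)) / d i +
        ∑ j ∈ (Finset.Icc 1 n).erase i, ((c i j : ℚ) / d j) * b j k u =
      if i = k ∧ u = 0 then 1 else 0)
    (hkey : ∀ i ∈ Finset.Icc 1 n, ∀ k ∈ Finset.Icc 1 n, ∀ u : ℤ, 0 ≤ u → u ≤ 2*(n:ℤ) - 1 →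
      (Ffun n d i k (u-1) + Ffun n d i k (u+1)) / d i +
        ∑ j ∈ (Finset.Icc 1 n).erase i, ((c i j : ℚ) / d j) * Ffun n d j k u
      = if i = k ∧ u = 0 then 1 else 0) :
    ∀ i ∈ Finset.Icc 1 n, ∀ k ∈ Finset.Icc 1 n, ∀ u : ℤ, u ≤ 2*(n:ℤ) →
      b i k u = Ffun n d i k u := by
  obtain ⟨N, hN⟩ := hlow
  have hvan : ∀ u : ℤ, u ≤ 0 → ∀ i ∈ Finset.Icc 1 n, ∀ k ∈ Finset.Icc 1 n, b i k u = 0 := by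
    have H : ∀ m : ℕ, ∀ u : ℤ, u ≤ 0 → u < N + m →
        ∀ i ∈ Finset.Icc 1 n, ∀ k ∈ Finset.Icc 1 n, b i k u = 0 := by
      intro m
      induction m with
      | zero => intro u hu hu' i hi k hk; exact hN i k u (by omega)
      | succ m ih =>
        intro u hu hu' i hi k hk
        by_cases hc : u < N + m
        · exact ih u hu hc i hi k hk
        · have h := h1 i hi k hk (u - 1)
          rw [if_neg (by omega)] at h
          have hz1 : b i k (u - 1 - 1) = 0 := ih (u-1-1) (by omega) (by omega) i hi k hk
          have hsum : ∑ j ∈ (Finset.Icc 1 n).erase i, ((c i j : ℚ) / d j) * b j k (u-1) = 0 :=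
            Finset.sum_eq_zero (fun j hj => by
              rw [ih (u-1) (by omega) (by omega) j (Finset.mem_of_mem_erase hj) k hk, mul_zero])
          rw [hz1, hsum, add_zero, zero_add] at h
          have hb : b i k (u - 1 + 1) = 0 :=
            (div_eq_zero_iff.mp h).resolve_right (hd i)
          have e : u - 1 + 1 = u := by ring
          rwa [e] at hb
    intro u hu i hi k hk
    exact H (u - N + 1).toNat u hu (by omega) i hi k hk
  have hFz : ∀ u : ℤ, u ≤ 0 → ∀ i k : ℕ, 1 ≤ i → 1 ≤ k → Ffun n d i k u = 0 := by
    intro u hu i k hi hk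
    unfold Ffun
    rw [Finset.sum_eq_zero, mul_zero]
    intro s hs
    rw [Finset.mem_Icc] at hs
    have h0 : (0:ℤ) ≤ |(i:ℤ) - (k:ℤ)| := abs_nonneg _
    rw [if_neg (by omega), if_neg (by omega), add_zero]
  have main : ∀ t : ℕ, ∀ u : ℤ, u ≤ t → u ≤ 2*(n:ℤ) →
      ∀ i ∈ Finset.Icc 1 n, ∀ k ∈ Finset.Icc 1 n, b i k u = Ffun n d i k u := by
    intro t
    induction t with
    | zero =>
      intro u hu _ i hi k hk
      rw [Finset.mem_Icc] at hi hk
      rw [hvan u (by exact_mod_cast hu) i (Finset.mem_Icc.mpr hi) k (Finset.mem_Icc.mpr hk),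
          hFz u (by exact_mod_cast hu) i k hi.1 hk.1]
    | succ t ih =>
      intro u hu hu2 i hi k hk
      by_cases hc : u ≤ t
      · exact ih u hc hu2 i hi k hk
      · have hu1 : 1 ≤ u := by
          have : (t:ℤ) < u := by omega
          omega
        have h := h1 i hi k hk (u-1)
        have hk' := hkey i hi k hk (u-1) (by omega) (by omega)
        have e1 : b i k (u-1-1) = Ffun n d i k (u-1-1) :=
          ih (u-1-1) (by push_cast; omega) (by omega) i hi k hk
        have e2 : ∑ j ∈ (Finset.Icc 1 n).erase i, ((c i j : ℚ) / d j) * b j k (u-1)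
            = ∑ j ∈ (Finset.Icc 1 n).erase i, ((c i j : ℚ) / d j) * Ffun n d j k (u-1) :=
          Finset.sum_congr rfl (fun j hj => by
            rw [ih (u-1) (by push_cast; omega) (by omega) j (Finset.mem_of_mem_erase hj) k hk])
        rw [e1, e2] at h
        have h3 : (Ffun n d i k (u-1-1) + b i k (u-1+1)) / d i
            = (Ffun n d i k (u-1-1) + Ffun n d i k (u-1+1)) / d i := by
          linarith [h, hk']
        have hdi := hd i
        field_simp at h3
        rw [sub_add_cancel] at h3; linarith [h3]
  intro i hi k hk u hu
  exact main (2*n) u (by push_cast; omega) hu i hi k hk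

/-- For types `Bₙ` and `Cₙ` (Coxeter number `h = 2n`), the polynomials
`δ̃ᵢⱼ(t) = ∑_{u=1}^{2n} b̃ᵢⱼ(u) tᵘ` obtained from the inverse of `B(t) = C_t(t)D⁻¹` are
given by `δ̃ᵢⱼ(t) = max(dᵢ,dⱼ) ∑_{s=1}^{min(i,j)} (t^{|i−j|+2s−1} +
[max(i,j) < n] t^{2n−i−j+2s−1})`. -/
theorem stmt16 (n : ℕ) (hn : 2 ≤ n)
    (c : ℕ → ℕ → ℤ) (d : ℕ → ℚ)
    (hBC : (c = cBmat n ∧ d = dBvec n) ∨ (c = cCmat n ∧ d = dCvec n))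
    (b : ℕ → ℕ → ℤ → ℚ)
    (hlow : ∃ N : ℤ, ∀ i j u, u < N → b i j u = 0)
    (h1 : ∀ i ∈ Finset.Icc 1 n, ∀ k ∈ Finset.Icc 1 n, ∀ u : ℤ,
      (b i k (u - 1) + b i k (u + 1)) / d i +
        ∑ j ∈ (Finset.Icc 1 n).erase i, ((c i j : ℚ) / d j) * b j k u =
      if i = k ∧ u = 0 then 1 else 0)
    (h2 : ∀ i ∈ Finset.Icc 1 n, ∀ k ∈ Finset.Icc 1 n, ∀ u : ℤ,
      (b i k (u - 1) + b i k (u + 1)) / d k +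
        ∑ j ∈ (Finset.Icc 1 n).erase k, b i j u * ((c j k : ℚ) / d k) =
      if i = k ∧ u = 0 then 1 else 0) :
    ∀ i ∈ Finset.Icc 1 n, ∀ j ∈ Finset.Icc 1 n, ∀ u : ℤ, 1 ≤ u → u ≤ 2 * (n : ℤ) →
      b i j u = max (d i) (d j) *
        ∑ s ∈ Finset.Icc 1 (min i j),
          ((if u = |(i : ℤ) - (j : ℤ)| + 2 * (s : ℤ) - 1 then 1 else 0) +
           (if max i j < n ∧ u = 2 * (n : ℤ) - i - j + 2 * (s : ℤ) - 1 then 1 else 0)) := by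
  rcases hBC with ⟨hc, hd⟩ | ⟨hc, hd⟩
  · subst hc; subst hd
    have hdne : ∀ i, dBvec n i ≠ 0 := by
      intro i; unfold dBvec; split <;> norm_num
    have hmain := mainlem n hn (dBvec n) hdne (cBmat n) b hlow h1
      (fun i hi k hk u hu0 hu2 => by
        rw [Finset.mem_Icc] at hi hk
        exact keyB n hn i k hi.1 hi.2 hk.1 hk.2 u hu0 hu2)
    intro i hi j hj u _ hu2
    exact hmain i hi j hj u hu2
  · subst hc; subst hd
    have hdne : ∀ i, dCvec n i ≠ 0 := by
      intro i; unfold dCvec; split <;> norm_num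
    have hmain := mainlem n hn (dCvec n) hdne (cCmat n) b hlow h1
      (fun i hi k hk u hu0 hu2 => by
        rw [Finset.mem_Icc] at hi hk
        exact keyC n hn i k hi.1 hi.2 hk.1 hk.2 u hu0 hu2)
    intro i hi j hj u _ hu2
    exact hmain i hi j hj u hu2
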